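/- For any probability generating function g of an ℕ-valued random variable and any s ∈ [0,1], 1 − g(s) ≥ (1 − g(0))·(1 − s). Consequently, for any probability generating functions g_0, …, g_{n−1} of ℕ-valued random variables, 1 − (g_{n−1} ∘ ⋯ ∘ g_0)(0) ≥ Π_{i=0}^{n−1} (1 − g_i(0)). -/

import Mathlib

open MeasureTheory Filter ENNReal NNReal

noncomputable section

/-- The probability generating function `s ↦ Σ_k p_k s^k` of the `ℕ`-valued distribution with
weights `p`. -/
def pgf (p : ℕ → ℝ≥0) (s : ℝ) : ℝ := ∑' k : ℕ, (p k : ℝ) * s ^ k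

/-- `compIter p n = (g_{n-1} ∘ ⋯ ∘ g_0)(0)`, where `g_i` is the p.g.f. with weights `p i`. -/
def compIter (p : ℕ → ℕ → ℝ≥0) : ℕ → ℝ
  | 0 => 0
  | n + 1 => pgf (p n) (compIter p n)

lemma summable_of_tsum_one (p : ℕ → ℝ≥0) (hp : (∑' k, p k) = 1) :
    Summable (fun k => (p k : ℝ)) := by
  rw [NNReal.summable_coe]
  by_contra h
  rw [tsum_eq_zero_of_not_summable h] at hp
  exact one_ne_zero hp.symm

lemma summable_pgf (p : ℕ → ℝ≥0) (hp : (∑' k, p k) = 1) {s : ℝ} (hs0 : 0 ≤ s) (hs1 : s ≤ 1) :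
    Summable (fun k : ℕ => (p k : ℝ) * s ^ k) := by
  refine Summable.of_nonneg_of_le (fun k => ?_) (fun k => ?_) (summable_of_tsum_one p hp)
  · positivity
  · calc (p k : ℝ) * s ^ k ≤ (p k : ℝ) * 1 :=
        mul_le_mul_of_nonneg_left (pow_le_one₀ hs0 hs1) (p k).coe_nonneg
      _ = p k := mul_one _

lemma pgf_zero (p : ℕ → ℝ≥0) : pgf p 0 = p 0 := by
  rw [pgf, tsum_eq_single 0]
  · simp
  · intro k hk
    simp [zero_pow hk]

lemma pgf_nonneg (p : ℕ → ℝ≥0) {s : ℝ} (hs0 : 0 ≤ s) : 0 ≤ pgf p s :=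
  tsum_nonneg fun k => by positivity

lemma pgf_le (p : ℕ → ℝ≥0) (hp : (∑' k, p k) = 1) {s : ℝ} (hs0 : 0 ≤ s) (hs1 : s ≤ 1) :
    pgf p s ≤ (p 0 : ℝ) + s * (1 - p 0) := by
  have hsum := summable_of_tsum_one p hp
  have htsum : (∑' k, (p k : ℝ)) = 1 := by
    rw [NNReal.coe_tsum.symm, hp]; norm_num
  have hf2 : Summable (fun k : ℕ => (if k = 0 then (p 0 : ℝ) * (1 - s) else 0)) :=
    summable_of_ne_finset_zero (s := {0}) (by intro k hk; simp at hk; simp [hk])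
  have hf : Summable (fun k : ℕ => (p k : ℝ) * s + (if k = 0 then (p 0 : ℝ) * (1 - s) else 0)) :=
    (hsum.mul_right s).add hf2
  have key : pgf p s ≤ ∑' k : ℕ,
      ((p k : ℝ) * s + (if k = 0 then (p 0 : ℝ) * (1 - s) else 0)) := by
    refine Summable.tsum_le_tsum (fun k => ?_) (summable_pgf p hp hs0 hs1) hf
    rcases Nat.eq_zero_or_pos k with hk | hk
    · subst hk; simp; ring_nf; simp
    · have : s ^ k ≤ s := by
        calc s ^ k ≤ s ^ 1 := pow_le_pow_of_le_one hs0 hs1 hk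
          _ = s := pow_one s
      have := mul_le_mul_of_nonneg_left this (p k).coe_nonneg
      rw [if_neg (Nat.pos_iff_ne_zero.mp hk)]
      linarith
  have heq : (∑' k : ℕ, ((p k : ℝ) * s + (if k = 0 then (p 0 : ℝ) * (1 - s) else 0)))
      = 1 * s + (p 0 : ℝ) * (1 - s) := by
    rw [Summable.tsum_add (hsum.mul_right s) hf2, _root_.tsum_mul_right, htsum]
    congr 1
    exact tsum_ite_eq 0 (fun _ => (p 0 : ℝ) * (1 - s))
  rw [heq] at key
  linarith

lemma p_zero_le_one (p : ℕ → ℝ≥0) (hp : (∑' k, p k) = 1) : (p 0 : ℝ) ≤ 1 := by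
  have hsum := summable_of_tsum_one p hp
  have htsum : (∑' k, (p k : ℝ)) = 1 := by
    rw [NNReal.coe_tsum.symm, hp]; norm_num
  have := Summable.le_tsum hsum 0 (fun i _ => (p i).coe_nonneg)
  linarith

/-- For any p.g.f. `g` of an `ℕ`-valued random variable and `s ∈ [0,1]`,
`1 − g(s) ≥ (1 − g(0))·(1 − s)`; consequently, for p.g.f.s `g_0, …, g_{n−1}`,
`1 − (g_{n−1} ∘ ⋯ ∘ g_0)(0) ≥ Π_{i<n} (1 − g_i(0))`. -/
theorem stmt8 :
    (∀ p : ℕ → ℝ≥0, (∑' k, p k) = 1 → ∀ s : ℝ, 0 ≤ s → s ≤ 1 →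
      (1 - pgf p 0) * (1 - s) ≤ 1 - pgf p s) ∧
    (∀ p : ℕ → ℕ → ℝ≥0, (∀ i, (∑' k, p i k) = 1) → ∀ n : ℕ,
      ∏ i ∈ Finset.range n, (1 - pgf (p i) 0) ≤ 1 - compIter p n) := by
  have main : ∀ p : ℕ → ℝ≥0, (∑' k, p k) = 1 → ∀ s : ℝ, 0 ≤ s → s ≤ 1 →
      (1 - pgf p 0) * (1 - s) ≤ 1 - pgf p s := by
    intro p hp s hs0 hs1
    have h1 := pgf_le p hp hs0 hs1
    rw [pgf_zero]
    nlinarith [p_zero_le_one p hp]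
  refine ⟨main, ?_⟩
  intro p hp n
  have hbound : ∀ n, 0 ≤ compIter p n ∧ compIter p n ≤ 1 := by
    intro n
    induction n with
    | zero => simp [compIter]
    | succ m ih =>
      obtain ⟨h0, h1⟩ := ih
      constructor
      · exact pgf_nonneg _ h0
      · calc pgf (p m) (compIter p m) ≤ (p m 0 : ℝ) + compIter p m * (1 - p m 0) :=
            pgf_le _ (hp m) h0 h1
          _ ≤ 1 := by nlinarith [p_zero_le_one (p m) (hp m)]
  induction n with
  | zero => simp [compIter]
  | succ m ih =>
    obtain ⟨h0, h1⟩ := hbound m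
    have step := main (p m) (hp m) (compIter p m) h0 h1
    rw [Finset.prod_range_succ]
    have hfac : (0:ℝ) ≤ 1 - pgf (p m) 0 := by
      rw [pgf_zero]; linarith [p_zero_le_one (p m) (hp m)]
    calc (∏ i ∈ Finset.range m, (1 - pgf (p i) 0)) * (1 - pgf (p m) 0)
        ≤ (1 - compIter p m) * (1 - pgf (p m) 0) := by
          apply mul_le_mul_of_nonneg_right ih hfac
      _ = (1 - pgf (p m) 0) * (1 - compIter p m) := mul_comm _ _
      _ ≤ 1 - pgf (p m) (compIter p m) := step
      _ = 1 - compIter p (m + 1) := rfl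

end
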